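/- Fix an integer r ≥ 2. For every ε > 0 there exists δ > 0 such that the following holds. Let ν be a weighted hypergraph on nonempty finite sets V₀, …, V_r with ‖ν‖_∞ ≥ 1, and suppose ‖ν_e − 1‖_{U^e} ≤ δ for every e ∈ H ∖ {e₀}. For each e ∈ H ∖ {e₀}, let g_e : V_e → ℝ_{≥0} be a function such that either g_e ≤ 1 pointwise or g_e ≤ ν_e pointwise. Then | 𝔼[ (ν_{e₀}(x_{e₀}) − 1) · ∏_{e∈H∖{e₀}} g_e(x_e) | x_J ∈ V_J ] | ≤ (1 + ε) · ‖ν_{e₀} − 1‖_{U^{e₀}} · ‖ν‖_∞^{r/2}. -/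

import Mathlib

open Finset
open scoped BigOperators

/-- Given `x₀, x₁ ∈ ∏ i, V i` and `ω : ι → Bool`, the mixed point `x^(ω)` whose `i`-th
coordinate is that of `x^(ωᵢ)` (with `false ↦ x₀`, `true ↦ x₁`). -/
def mixPoint {ι : Type} {V : ι → Type} (ω : ι → Bool) (x₀ x₁ : ∀ i, V i) : ∀ i, V i :=
  fun i => if ω i then x₁ i else x₀ i

/-- The Gowers box norm `‖g‖_{U^e}` of a function `g : ∏ i, V i → ℝ`. -/
noncomputable def boxNorm {ι : Type} [Fintype ι] [DecidableEq ι] {V : ι → Type}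
    [∀ i, Fintype (V i)] (g : (∀ i, V i) → ℝ) : ℝ :=
  (𝔼 x₀ : ∀ i, V i, 𝔼 x₁ : ∀ i, V i, ∏ ω : ι → Bool, g (mixPoint ω x₀ x₁)) ^
    ((1 : ℝ) / 2 ^ Fintype.card ι)

/-- `V_{e_j}`, the product of the `V i` over the edge `e_j = J ∖ {j}`. -/
abbrev EdgeSpace {r : ℕ} (V : Fin (r + 1) → Type) (j : Fin (r + 1)) : Type :=
  ∀ i : {i : Fin (r + 1) // i ≠ j}, V i

/-- `‖ν‖_∞`, the maximum value taken by any of the weights `ν_e`, `e ∈ H`,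
of a weighted hypergraph `ν` (where `ν j` is the weight on the edge `e_j`). -/
noncomputable def hypSup {r : ℕ} (V : Fin (r + 1) → Type) [∀ i, Fintype (V i)]
    (ν : ∀ j : Fin (r + 1), EdgeSpace V j → ℝ) : ℝ :=
  ⨆ j, ⨆ x : EdgeSpace V j, ν j x

/-- The point of `V_{e_j}` with `0`-coordinate `x₀` and remaining coordinates given by
`y ∈ V_{e₀}` (for `j ≠ 0`; the coordinate `0` belongs to `e_j`). -/
def glue {r : ℕ} {V : Fin (r + 1) → Type} (j : Fin (r + 1)) (x₀ : V 0)
    (y : EdgeSpace V 0) : EdgeSpace V j :=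
  fun i => if h : (i : Fin (r + 1)) = 0 then cast (congrArg V h).symm x₀ else y ⟨i, h⟩

set_option linter.unusedSectionVars false
set_option linter.unusedVariables false
set_option maxHeartbeats 1000000

namespace SLF

variable {ι : Type} [Fintype ι] [DecidableEq ι] {β : ι → Type}
  [∀ i, Fintype (β i)] [∀ i, Nonempty (β i)]

def mixZ (ω : ι → Bool) (z : ∀ i, β i × β i) : ∀ i, β i :=
  fun i => if ω i then (z i).2 else (z i).1

def swapAt (u : ι) (z : ∀ i, β i × β i) : ∀ i, β i × β i :=
  Function.update z u ((z u).2, (z u).1)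

def flipAt (u : ι) (ω : ι → Bool) : ι → Bool := Function.update ω u (!(ω u))

def DepFst (u : ι) (Q : (∀ i, β i × β i) → ℝ) : Prop :=
  ∀ z (a b b' : β u), Q (Function.update z u (a, b)) = Q (Function.update z u (a, b'))

def DepSnd (u : ι) (Q : (∀ i, β i × β i) → ℝ) : Prop :=
  ∀ z (a a' b : β u), Q (Function.update z u (a, b)) = Q (Function.update z u (a', b))

lemma master_sum (u : ι) (Q₀ Q₁ : (∀ i, β i × β i) → ℝ)
    (h₀ : DepFst u Q₀) (h₁ : DepSnd u Q₁) :
    (∑ z, Q₀ z * Q₁ z) ^ 2 ≤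
        (∑ z, Q₀ z * Q₀ (swapAt u z)) * ∑ z, Q₁ z * Q₁ (swapAt u z) ∧
      0 ≤ ∑ z, Q₀ z * Q₀ (swapAt u z) ∧ 0 ≤ ∑ z, Q₁ z * Q₁ (swapAt u z) := by
  classical
  set e := Equiv.piSplitAt u (fun i => β i × β i) with he
  set pt : β u × β u → (∀ j : {j // j ≠ u}, β j × β j) → (∀ i, β i × β i) :=
    fun w y => e.symm (w, y) with hpt
  have pt_apply_u : ∀ w y, pt w y u = w := by
    intro w y
    have := e.apply_symm_apply (w, y)
    exact congrArg Prod.fst this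
  have pt_apply_ne : ∀ w y i (h : i ≠ u), pt w y i = y ⟨i, h⟩ := by
    intro w y i h
    have := e.apply_symm_apply (w, y)
    exact congrArg (fun p => p.2 ⟨i, h⟩) this
  have pt_update : ∀ w w' y, pt w y = Function.update (pt w' y) u w := by
    intro w w' y
    funext i
    by_cases h : i = u
    · subst h; rw [Function.update_self, pt_apply_u]
    · rw [Function.update_of_ne h, pt_apply_ne _ _ _ h, pt_apply_ne _ _ _ h]
  have swap_pt : ∀ a b y, swapAt u (pt (a, b) y) = pt (b, a) y := by
    intro a b y
    have h1 : swapAt u (pt (a, b) y) = Function.update (pt (a, b) y) u (b, a) := by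
      rw [swapAt, pt_apply_u]
    rw [h1, pt_update (b, a) (a, b) y]
  set q₀ : β u → (∀ j : {j // j ≠ u}, β j × β j) → ℝ := fun a y => Q₀ (pt (a, a) y) with hq₀def
  set q₁ : β u → (∀ j : {j // j ≠ u}, β j × β j) → ℝ := fun b y => Q₁ (pt (b, b) y) with hq₁def
  have hq₀ : ∀ a b y, Q₀ (pt (a, b) y) = q₀ a y := by
    intro a b y
    rw [hq₀def]
    rw [pt_update (a, b) (a, a) y, h₀ (pt (a,a) y) a b a, ← pt_update (a, a) (a, a) y]
  have hq₁ : ∀ a b y, Q₁ (pt (a, b) y) = q₁ b y := by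
    intro a b y
    rw [hq₁def]
    rw [pt_update (a, b) (b, b) y, h₁ (pt (b,b) y) a b b, ← pt_update (b, b) (b, b) y]
  have hsum : ∀ F : (∀ i, β i × β i) → ℝ,
      ∑ z, F z = ∑ y, ∑ a, ∑ b, F (pt (a, b) y) := by
    intro F
    rw [← Equiv.sum_comp e.symm F, Fintype.sum_prod_type]
    rw [Finset.sum_comm]
    refine Finset.sum_congr rfl fun y _ => ?_
    rw [Fintype.sum_prod_type]
  have hS : ∑ z, Q₀ z * Q₁ z = ∑ y, (∑ a, q₀ a y) * (∑ b, q₁ b y) := by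
    rw [hsum]
    refine Finset.sum_congr rfl fun y _ => ?_
    rw [Finset.sum_mul_sum]
    exact Finset.sum_congr rfl fun a _ => Finset.sum_congr rfl fun b _ => by
      rw [hq₀ a b y, hq₁ a b y]
  have hS₀ : ∑ z, Q₀ z * Q₀ (swapAt u z) = ∑ y, (∑ a, q₀ a y) ^ 2 := by
    rw [hsum fun z => Q₀ z * Q₀ (swapAt u z)]
    refine Finset.sum_congr rfl fun y _ => ?_
    rw [sq, Finset.sum_mul_sum]
    exact Finset.sum_congr rfl fun a _ => Finset.sum_congr rfl fun b _ => by
      rw [swap_pt, hq₀ a b y, hq₀ b a y]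
  have hS₁ : ∑ z, Q₁ z * Q₁ (swapAt u z) = ∑ y, (∑ b, q₁ b y) ^ 2 := by
    rw [hsum fun z => Q₁ z * Q₁ (swapAt u z)]
    refine Finset.sum_congr rfl fun y _ => ?_
    rw [sq, Finset.sum_mul_sum]
    exact Finset.sum_congr rfl fun a _ => Finset.sum_congr rfl fun b _ => by
      rw [swap_pt, hq₁ a b y, hq₁ b a y, mul_comm]
  refine ⟨?_, ?_, ?_⟩
  · rw [hS, hS₀, hS₁]
    exact Finset.sum_mul_sq_le_sq_mul_sq _ _ _
  · rw [hS₀]; exact Finset.sum_nonneg fun y _ => sq_nonneg _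
  · rw [hS₁]; exact Finset.sum_nonneg fun y _ => sq_nonneg _

lemma master_expect (u : ι) (Q₀ Q₁ : (∀ i, β i × β i) → ℝ)
    (h₀ : DepFst u Q₀) (h₁ : DepSnd u Q₁) :
    (𝔼 z, Q₀ z * Q₁ z) ^ 2 ≤
        (𝔼 z, Q₀ z * Q₀ (swapAt u z)) * 𝔼 z, Q₁ z * Q₁ (swapAt u z) ∧
      0 ≤ 𝔼 z, Q₀ z * Q₀ (swapAt u z) ∧ 0 ≤ 𝔼 z, Q₁ z * Q₁ (swapAt u z) := by
  obtain ⟨h, h0, h1⟩ := master_sum u Q₀ Q₁ h₀ h₁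
  have hc : (0:ℝ) < (Fintype.card (∀ i, β i × β i) : ℝ) := by
    exact_mod_cast Fintype.card_pos
  simp only [Fintype.expect_eq_sum_div_card]
  refine ⟨?_, by positivity, by positivity⟩
  rw [div_pow, div_mul_div_comm, ← sq]
  exact div_le_div_of_nonneg_right h (by positivity) |>.trans_eq rfl


-- cube machinery
def cubeSet (S : Finset ι) : Finset (ι → Bool) :=
  Finset.univ.filter (fun ω => ∀ i, i ∉ S → ω i = false)

lemma mem_cubeSet {S : Finset ι} {ω : ι → Bool} :
    ω ∈ cubeSet S ↔ ∀ i ∉ S, ω i = false := by simp [cubeSet]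

noncomputable def prodOver (A : Finset (ι → Bool)) (F : (∀ i, β i) → ℝ)
    (z : ∀ i, β i × β i) : ℝ := ∏ ω ∈ A, F (mixZ ω z)

noncomputable def EP (A : Finset (ι → Bool)) (F : (∀ i, β i) → ℝ) : ℝ :=
  𝔼 z : ∀ i, β i × β i, prodOver A F z

lemma flipAt_flipAt (u : ι) (ω : ι → Bool) : flipAt u (flipAt u ω) = ω := by
  funext i
  by_cases h : i = u
  · subst h; simp [flipAt]
  · simp [flipAt, Function.update_of_ne h]

lemma flipAt_involutive (u : ι) : Function.Involutive (flipAt u) := flipAt_flipAt u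

lemma flipAt_apply_self (u : ι) (ω : ι → Bool) : flipAt u ω u = !(ω u) := by
  simp [flipAt]

lemma flipAt_apply_ne (u : ι) (ω : ι → Bool) {i : ι} (h : i ≠ u) : flipAt u ω i = ω i := by
  simp [flipAt, Function.update_of_ne h]

lemma mixZ_update (ω : ι → Bool) (z : ∀ i, β i × β i) (u : ι) (w : β u × β u) :
    mixZ ω (Function.update z u w) =
      Function.update (mixZ ω z) u (if ω u then w.2 else w.1) := by
  funext i
  by_cases h : i = u
  · subst h; simp [mixZ]
  · simp [mixZ, Function.update_of_ne h]

lemma mixZ_swapAt (ω : ι → Bool) (u : ι) (z : ∀ i, β i × β i) :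
    mixZ ω (swapAt u z) = mixZ (flipAt u ω) z := by
  funext i
  by_cases h : i = u
  · subst h
    simp only [swapAt, mixZ, Function.update_self, flipAt_apply_self]
    cases hω : ω i <;> simp
  · simp [mixZ, swapAt, Function.update_of_ne h, flipAt_apply_ne u ω h]

def CoordIndep (u : ι) (F : (∀ i, β i) → ℝ) : Prop :=
  ∀ x v, F (Function.update x u v) = F x

lemma prodOver_depFst {A : Finset (ι → Bool)} {u : ι} (F : (∀ i, β i) → ℝ)
    (hA : ∀ ω ∈ A, ω u = false) : DepFst u (prodOver A F) := by
  intro z a b b'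
  refine Finset.prod_congr rfl fun ω hω => ?_
  rw [mixZ_update, mixZ_update, hA ω hω]
  simp

lemma prodOver_depSnd {A : Finset (ι → Bool)} {u : ι} (F : (∀ i, β i) → ℝ)
    (hA : ∀ ω ∈ A, ω u = true) : DepSnd u (prodOver A F) := by
  intro z a a' b
  refine Finset.prod_congr rfl fun ω hω => ?_
  rw [mixZ_update, mixZ_update, hA ω hω]
  simp

lemma prodOver_swapAt (A : Finset (ι → Bool)) (F : (∀ i, β i) → ℝ) (u : ι)
    (z : ∀ i, β i × β i) :
    prodOver A F (swapAt u z) = prodOver (A.image (flipAt u)) F z := by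
  unfold prodOver
  rw [Finset.prod_image (fun ω _ ω' _ h => (flipAt_involutive u).injective h)]
  exact Finset.prod_congr rfl fun ω _ => by rw [mixZ_swapAt]

lemma disjoint_flip {A : Finset (ι → Bool)} {u : ι} {c : Bool}
    (hA : ∀ ω ∈ A, ω u = c) : Disjoint A (A.image (flipAt u)) := by
  rw [Finset.disjoint_left]
  intro ω hωA hωimg
  obtain ⟨ω', hmem, heq⟩ := Finset.mem_image.1 hωimg
  have h1 := hA _ hωA
  have h2 := hA _ hmem
  rw [← heq, flipAt_apply_self, h2] at h1
  cases c <;> simp at h1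

lemma prodOver_union {A B : Finset (ι → Bool)} (h : Disjoint A B) (F : (∀ i, β i) → ℝ)
    (z : ∀ i, β i × β i) : prodOver (A ∪ B) F z = prodOver A F z * prodOver B F z :=
  Finset.prod_union h

lemma cubeSet_insert {S : Finset ι} {u : ι} (hu : u ∉ S) :
    cubeSet (insert u S) = cubeSet S ∪ (cubeSet S).image (flipAt u) := by
  ext ω
  simp only [mem_cubeSet, Finset.mem_union, Finset.mem_image]
  constructor
  · intro h
    by_cases hωu : ω u = false
    · left
      intro i hi
      by_cases hiu : i = u
      · subst hiu; exact hωu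
      · exact h i (by simp [Finset.mem_insert, hiu, hi])
    · right
      refine ⟨flipAt u ω, ?_, flipAt_flipAt u ω⟩
      intro i hi
      by_cases hiu : i = u
      · subst hiu
        rw [flipAt_apply_self]
        simp only [Bool.not_eq_false] at hωu
        rw [hωu]
        rfl
      · rw [flipAt_apply_ne u ω hiu]
        exact h i (by simp [Finset.mem_insert, hiu, hi])
  · rintro (h | ⟨ω', h, rfl⟩) <;> intro i hi
    · exact h i fun hiS => hi (Finset.mem_insert_of_mem hiS)
    · have hiu : i ≠ u := fun he => hi (he ▸ Finset.mem_insert_self u S)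
      rw [flipAt_apply_ne u ω' hiu]
      exact h i fun hiS => hi (Finset.mem_insert_of_mem hiS)

lemma cubeSet_mem_false {S : Finset ι} {u : ι} (hu : u ∉ S) :
    ∀ ω ∈ cubeSet S, ω u = false := fun ω hω => (mem_cubeSet.1 hω) u hu

lemma prodOver_cube_insert {S : Finset ι} {u : ι} (hu : u ∉ S) (F : (∀ i, β i) → ℝ)
    (z : ∀ i, β i × β i) :
    prodOver (cubeSet (insert u S)) F z =
      prodOver (cubeSet S) F z * prodOver (cubeSet S) F (swapAt u z) := by
  rw [cubeSet_insert hu, prodOver_union (disjoint_flip (cubeSet_mem_false hu)) F z,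
    prodOver_swapAt]

lemma prodOver_update_indep {A : Finset (ι → Bool)} {u : ι} {F : (∀ i, β i) → ℝ}
    (hF : CoordIndep u F) (z : ∀ i, β i × β i) (w : β u × β u) :
    prodOver A F (Function.update z u w) = prodOver A F z := by
  refine Finset.prod_congr rfl fun ω _ => ?_
  rw [mixZ_update]
  exact hF _ _

lemma prodOver_swapAt_indep {A : Finset (ι → Bool)} {u : ι} {F : (∀ i, β i) → ℝ}
    (hF : CoordIndep u F) (z : ∀ i, β i × β i) :
    prodOver A F (swapAt u z) = prodOver A F z :=
  prodOver_update_indep hF z _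

lemma chain_step (S : Finset ι) (u : ι) (hu : u ∉ S) (F₀ F₁ : (∀ i, β i) → ℝ)
    (hI : CoordIndep u F₁) :
    (𝔼 z : ∀ i, β i × β i, prodOver (cubeSet S) F₀ z * prodOver (cubeSet S) F₁ z) ^ 2 ≤
        EP (cubeSet (insert u S)) F₀ *
          (𝔼 z : ∀ i, β i × β i, (prodOver (cubeSet S) F₁ z) ^ 2) ∧
      0 ≤ EP (cubeSet (insert u S)) F₀ := by
  have hQ₀ : DepFst u (prodOver (cubeSet S) F₀) :=
    prodOver_depFst F₀ (cubeSet_mem_false hu)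
  have hQ₁ : DepSnd u (prodOver (cubeSet S) F₁) := by
    intro z a a' b
    rw [prodOver_update_indep hI, prodOver_update_indep hI]
  obtain ⟨h, h0, h1⟩ := master_expect u (prodOver (cubeSet S) F₀) (prodOver (cubeSet S) F₁) hQ₀ hQ₁
  have e0 : (𝔼 z : ∀ i, β i × β i,
      prodOver (cubeSet S) F₀ z * prodOver (cubeSet S) F₀ (swapAt u z)) =
      EP (cubeSet (insert u S)) F₀ := by
    unfold EP
    exact Finset.expect_congr rfl fun z _ => (prodOver_cube_insert hu F₀ z).symm
  have e1 : (𝔼 z : ∀ i, β i × β i,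
      prodOver (cubeSet S) F₁ z * prodOver (cubeSet S) F₁ (swapAt u z)) =
      (𝔼 z : ∀ i, β i × β i, (prodOver (cubeSet S) F₁ z) ^ 2) := by
    refine Finset.expect_congr rfl fun z _ => ?_
    rw [prodOver_swapAt_indep hI, sq]
  rw [e0, e1] at h
  rw [e0] at h0
  exact ⟨h, h0⟩

lemma EP_cube_nonneg (U : Finset ι) (hU : U.Nonempty) (F : (∀ i, β i) → ℝ) :
    0 ≤ EP (cubeSet U) (β := β) F := by
  obtain ⟨u, hu⟩ := hU
  have h := chain_step (β := β) (U.erase u) u (Finset.notMem_erase u U) F (fun _ => 1)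
    (fun x v => rfl)
  rw [Finset.insert_erase hu] at h
  exact h.2

lemma mono_step {S : Finset ι} {u : ι} (hu : u ∉ S) (F : (∀ i, β i) → ℝ) :
    (EP (cubeSet S) (β := β) F) ^ 2 ≤ EP (cubeSet (insert u S)) F := by
  have h := (chain_step S u hu F (fun _ => 1) (fun x v => rfl)).1
  have h1 : ∀ z : ∀ i, β i × β i, prodOver (cubeSet S) (fun _ => (1:ℝ)) z = 1 :=
    fun z => Finset.prod_const_one
  calc (EP (cubeSet S) (β := β) F) ^ 2
      = (𝔼 z : ∀ i, β i × β i,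
          prodOver (cubeSet S) F z * prodOver (cubeSet S) (fun _ => 1) z) ^ 2 := by
        unfold EP
        congr 1
        exact Finset.expect_congr rfl fun z _ => by rw [h1 z, mul_one]
    _ ≤ EP (cubeSet (insert u S)) F *
          (𝔼 z : ∀ i, β i × β i, (prodOver (cubeSet S) (fun _ => (1:ℝ)) z) ^ 2) := h
    _ = EP (cubeSet (insert u S)) F := by
        rw [show (𝔼 z : ∀ i, β i × β i, (prodOver (cubeSet S) (fun _ => (1:ℝ)) z) ^ 2) = 1 by
          rw [Finset.expect_congr rfl fun z _ => by rw [h1 z, one_pow]]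
          exact Finset.expect_const Finset.univ_nonempty 1, mul_one]

lemma EP_nonneg {A : Finset (ι → Bool)} {F : (∀ i, β i) → ℝ} (hF : ∀ x, 0 ≤ F x) :
    0 ≤ EP A (β := β) F :=
  Finset.expect_nonneg fun z _ => Finset.prod_nonneg fun ω _ => hF _

lemma EP_cube_le_of_full {F : (∀ i, β i) → ℝ} {B : ℝ} {U : Finset ι}
    (hF : ∀ x, 0 ≤ F x) (hB : 1 ≤ B) (hUB : EP (cubeSet U) (β := β) F ≤ B) :
    ∀ S ⊆ U, EP (cubeSet S) (β := β) F ≤ B := by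
  suffices h : ∀ n, ∀ S ⊆ U, (U \ S).card = n → EP (cubeSet S) (β := β) F ≤ B by
    intro S hS; exact h _ S hS rfl
  intro n
  induction n with
  | zero =>
    intro S hS hcard
    have : S = U := Finset.Subset.antisymm hS
      (Finset.sdiff_eq_empty_iff_subset.1 (Finset.card_eq_zero.1 hcard))
    rw [this]; exact hUB
  | succ n ih =>
    intro S hS hcard
    have hne : (U \ S).Nonempty := Finset.card_pos.1 (by omega)
    obtain ⟨u, hu⟩ := hne
    rw [Finset.mem_sdiff] at hu
    have hS' : insert u S ⊆ U := Finset.insert_subset hu.1 hS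
    have hcard' : (U \ insert u S).card = n := by
      rw [Finset.sdiff_insert]
      rw [Finset.card_erase_of_mem (Finset.mem_sdiff.2 hu)]
      omega
    have h2 := ih (insert u S) hS' hcard'
    have h1 := mono_step (β := β) hu.2 F
    have h0 : 0 ≤ EP (cubeSet S) (β := β) F := EP_nonneg hF
    nlinarith [h1.trans h2]

lemma EP_empty (F : (∀ i, β i) → ℝ) : EP (∅ : Finset (ι → Bool)) (β := β) F = 1 := by
  unfold EP prodOver
  rw [Finset.expect_congr rfl fun z _ => Finset.prod_empty]
  exact Finset.expect_const Finset.univ_nonempty 1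

lemma cubeSet_card_le (S : Finset ι) : (cubeSet S).card ≤ 2 ^ S.card := by
  classical
  have h := Finset.card_le_card_of_injOn
    (s := cubeSet S)
    (f := fun (ω : ι → Bool) => (fun i : {i // i ∈ S} => ω ↑i))
    (t := (Finset.univ : Finset ({i // i ∈ S} → Bool)))
    (fun ω _ => Finset.mem_univ _) ?_
  · refine h.trans ?_
    rw [Finset.card_univ, Fintype.card_fun]
    simp [Fintype.card_coe]
  · intro ω hω ω' hω' hee
    funext i
    by_cases hi : i ∈ S
    · exact congrFun hee ⟨i, hi⟩
    · rw [Finset.mem_coe, mem_cubeSet] at hω hω'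
      rw [hω i hi, hω' i hi]

lemma prodOver_mul (A : Finset (ι → Bool)) (F G : (∀ i, β i) → ℝ) (z : ∀ i, β i × β i) :
    prodOver A (fun x => F x * G x) z = prodOver A F z * prodOver A G z :=
  Finset.prod_mul_distrib

lemma chain (T : Finset ι) (Φ : (∀ i, β i) → ℝ) (G : ι → (∀ i, β i) → ℝ) (K B : ℝ)
    (hK : 1 ≤ K) (hB : 0 ≤ B)
    (hGI : ∀ t ∈ T, CoordIndep t (G t))
    (hA : ∀ t ∈ T, ∀ S ⊆ T, t ∉ S →
      (𝔼 z : ∀ i, β i × β i, (prodOver (cubeSet S) (G t) z) ^ 2) ≤ K ^ 2 ^ S.card * B)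
    (hDT : 0 ≤ EP (cubeSet T) (β := β) (fun x => Φ x * ∏ j ∈ T \ T, G j x)) :
    ∀ n, ∀ S ⊆ T, (T \ S).card = n →
      |EP (cubeSet S) (β := β) (fun x => Φ x * ∏ j ∈ T \ S, G j x)| ^ 2 ^ n ≤
        K ^ (n * 2 ^ (T.card - 1)) * B ^ (2 ^ n - 1) *
          EP (cubeSet T) (β := β) (fun x => Φ x * ∏ j ∈ T \ T, G j x) := by
  intro n
  induction n with
  | zero =>
    intro S hS hcard
    have hST : S = T := Finset.Subset.antisymm hS
      (Finset.sdiff_eq_empty_iff_subset.1 (Finset.card_eq_zero.1 hcard))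
    rw [hST]
    simp only [pow_zero, pow_one, zero_mul, one_mul, Nat.sub_self]
    rw [abs_of_nonneg hDT]
  | succ n ih =>
    intro S hS hcard
    have hne : (T \ S).Nonempty := Finset.card_pos.1 (by omega)
    obtain ⟨u, hu⟩ := hne
    rw [Finset.mem_sdiff] at hu
    have hS' : insert u S ⊆ T := Finset.insert_subset hu.1 hS
    have hcard' : (T \ insert u S).card = n := by
      rw [Finset.sdiff_insert, Finset.card_erase_of_mem (Finset.mem_sdiff.2 hu)]
      omega
    have hcards : S.card + (n + 1) = T.card := by
      have := Finset.card_sdiff_add_card_eq_card hS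
      omega
    have hsplit : ∀ z : ∀ i, β i × β i,
        prodOver (cubeSet S) (fun x => Φ x * ∏ j ∈ T \ S, G j x) z =
          prodOver (cubeSet S) (fun x => Φ x * ∏ j ∈ T \ insert u S, G j x) z *
            prodOver (cubeSet S) (G u) z := by
      intro z
      rw [← prodOver_mul]
      refine Finset.prod_congr rfl fun ω _ => ?_
      dsimp only
      rw [Finset.sdiff_insert, ← Finset.mul_prod_erase _ _ (Finset.mem_sdiff.2 hu)]
      ring
    have hstep := chain_step S u hu.2
      (fun x => Φ x * ∏ j ∈ T \ insert u S, G j x) (G u) (hGI u hu.1)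
    have hDDS : EP (cubeSet S) (β := β) (fun x => Φ x * ∏ j ∈ T \ S, G j x) =
        𝔼 z : ∀ i, β i × β i,
          prodOver (cubeSet S) (fun x => Φ x * ∏ j ∈ T \ insert u S, G j x) z *
            prodOver (cubeSet S) (G u) z :=
      Finset.expect_congr rfl fun z _ => hsplit z
    have hsq : (EP (cubeSet S) (β := β) (fun x => Φ x * ∏ j ∈ T \ S, G j x)) ^ 2 ≤
        EP (cubeSet (insert u S)) (β := β) (fun x => Φ x * ∏ j ∈ T \ insert u S, G j x) *
          (𝔼 z : ∀ i, β i × β i, (prodOver (cubeSet S) (G u) z) ^ 2) := by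
      rw [hDDS]; exact hstep.1
    have hA0 : (0:ℝ) ≤ 𝔼 z : ∀ i, β i × β i, (prodOver (cubeSet S) (G u) z) ^ 2 :=
      Finset.expect_nonneg fun z _ => sq_nonneg _
    have hAle := hA u hu.1 S hS hu.2
    have hD'0 := hstep.2
    have hih := ih (insert u S) hS' hcard'
    rw [abs_of_nonneg hD'0] at hih
    set D := EP (cubeSet S) (β := β) (fun x => Φ x * ∏ j ∈ T \ S, G j x) with hD
    set D' := EP (cubeSet (insert u S)) (β := β)
      (fun x => Φ x * ∏ j ∈ T \ insert u S, G j x) with hD'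
    set DT := EP (cubeSet T) (β := β) (fun x => Φ x * ∏ j ∈ T \ T, G j x) with hDTdef
    set A := 𝔼 z : ∀ i, β i × β i, (prodOver (cubeSet S) (G u) z) ^ 2 with hAdef
    have hK0 : (0:ℝ) ≤ K := by linarith
    have habs : |D| ^ 2 ^ (n + 1) = (D ^ 2) ^ 2 ^ n := by
      rw [← sq_abs, ← pow_mul]
      congr 1
      rw [pow_succ]
      ring
    have e1 : 2 ^ S.card * 2 ^ n = 2 ^ (T.card - 1) := by
      rw [← pow_add]
      congr 1
      omega
    calc |D| ^ 2 ^ (n + 1) = (D ^ 2) ^ 2 ^ n := habs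
      _ ≤ (D' * A) ^ 2 ^ n := pow_le_pow_left₀ (sq_nonneg D) hsq _
      _ = D' ^ 2 ^ n * A ^ 2 ^ n := mul_pow _ _ _
      _ ≤ (K ^ (n * 2 ^ (T.card - 1)) * B ^ (2 ^ n - 1) * DT) *
            ((K ^ 2 ^ S.card * B) ^ 2 ^ n) := by
          refine mul_le_mul hih (pow_le_pow_left₀ hA0 hAle _) (pow_nonneg hA0 _) ?_
          have h1 : (0:ℝ) ≤ K ^ (n * 2 ^ (T.card - 1)) := pow_nonneg hK0 _
          have h2 : (0:ℝ) ≤ B ^ (2 ^ n - 1) := pow_nonneg hB _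
          have h3 : (0:ℝ) ≤ DT := hDT
          positivity
      _ = K ^ ((n + 1) * 2 ^ (T.card - 1)) * B ^ (2 ^ (n + 1) - 1) * DT := by
          rw [mul_pow, ← pow_mul, e1]
          rw [show (n + 1) * 2 ^ (T.card - 1) = n * 2 ^ (T.card - 1) + 2 ^ (T.card - 1) by ring]
          rw [show 2 ^ (n + 1) - 1 = (2 ^ n - 1) + 2 ^ n by
            have := Nat.one_le_two_pow (n := n); rw [pow_succ]; omega]
          rw [pow_add, pow_add]
          ring

lemma abs_pow_two_pow_succ (x : ℝ) (n : ℕ) : |x| ^ 2 ^ (n + 1) = (x ^ 2) ^ 2 ^ n := by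
  rw [← sq_abs, ← pow_mul]
  congr 1
  rw [pow_succ]
  ring

lemma flipAt_comm {u u' : ι} (h : u ≠ u') (ω : ι → Bool) :
    flipAt u (flipAt u' ω) = flipAt u' (flipAt u ω) := by
  funext i
  by_cases h1 : i = u
  · subst h1
    rw [flipAt_apply_self, flipAt_apply_ne u' _ h, flipAt_apply_ne u' _ h, flipAt_apply_self]
  · by_cases h2 : i = u'
    · subst h2
      rw [flipAt_apply_ne u _ h1, flipAt_apply_self, flipAt_apply_self, flipAt_apply_ne u _ h1]
    · rw [flipAt_apply_ne u _ h1, flipAt_apply_ne u' _ h2, flipAt_apply_ne u' _ h2,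
        flipAt_apply_ne u _ h1]

lemma flip_mem_cubeSet {U : Finset ι} {u : ι} (hu : u ∈ U) {ω : ι → Bool}
    (hω : ω ∈ cubeSet U) : flipAt u ω ∈ cubeSet U := by
  rw [mem_cubeSet] at hω ⊢
  intro i hi
  have hiu : i ≠ u := fun h => hi (h ▸ hu)
  rw [flipAt_apply_ne u ω hiu]
  exact hω i hi

lemma orbit {U : Finset ι} {A : Finset (ι → Bool)} (hA : A ⊆ cubeSet U)
    (hinv : ∀ u ∈ U, A.image (flipAt u) = A) (hne : A.Nonempty) : A = cubeSet U := by
  refine Finset.Subset.antisymm hA fun ω hω => ?_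
  obtain ⟨ω₀, hω₀⟩ := hne
  suffices h : ∀ n (ω₀ : ι → Bool), ω₀ ∈ A →
      (Finset.univ.filter fun i => ω i ≠ ω₀ i).card = n → ω ∈ A from h _ ω₀ hω₀ rfl
  intro n
  induction n with
  | zero =>
    intro ω₀ h0 hc
    have he : ω = ω₀ := by
      funext i
      by_contra hne'
      have hmem : i ∈ Finset.univ.filter fun i => ω i ≠ ω₀ i := by simp [hne']
      rw [Finset.card_eq_zero.1 hc] at hmem
      exact absurd hmem (Finset.notMem_empty i)
    rwa [he]
  | succ n ih =>
    intro ω₀ h0 hc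
    have hne2 : (Finset.univ.filter fun i => ω i ≠ ω₀ i).Nonempty :=
      Finset.card_pos.1 (by omega)
    obtain ⟨u, hu⟩ := hne2
    have huneq : ω u ≠ ω₀ u := (Finset.mem_filter.1 hu).2
    have huU : u ∈ U := by
      by_contra huU
      exact huneq (((mem_cubeSet.1 hω) u huU).trans ((mem_cubeSet.1 (hA h0)) u huU).symm)
    have h0' : flipAt u ω₀ ∈ A := by
      rw [← hinv u huU]
      exact Finset.mem_image_of_mem _ h0
    refine ih (flipAt u ω₀) h0' ?_
    have heq : (Finset.univ.filter fun i => ω i ≠ flipAt u ω₀ i) =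
        (Finset.univ.filter fun i => ω i ≠ ω₀ i).erase u := by
      ext i
      simp only [Finset.mem_filter, Finset.mem_erase, Finset.mem_univ, true_and, and_true]
      by_cases hiu : i = u
      · subst hiu
        rw [flipAt_apply_self]
        have hval : ω i = !(ω₀ i) := by revert huneq; cases ω i <;> cases ω₀ i <;> simp
        simp [hval]
      · rw [flipAt_apply_ne u ω₀ hiu]
        constructor
        · intro h; exact ⟨hiu, h⟩
        · intro h; exact h.2
    rw [heq, Finset.card_erase_of_mem hu]
    omega

lemma symm_step (A : Finset (ι → Bool)) (u : ι) (F : (∀ i, β i) → ℝ) :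
    (EP A (β := β) F) ^ 2 ≤
        EP ((A.filter fun ω => ω u = false) ∪
              (A.filter fun ω => ω u = false).image (flipAt u)) F *
          EP ((A.filter fun ω => ω u = true) ∪
              (A.filter fun ω => ω u = true).image (flipAt u)) F ∧
      0 ≤ EP ((A.filter fun ω => ω u = false) ∪
              (A.filter fun ω => ω u = false).image (flipAt u)) (β := β) F ∧
      0 ≤ EP ((A.filter fun ω => ω u = true) ∪
              (A.filter fun ω => ω u = true).image (flipAt u)) (β := β) F := by
  classical
  set A₀ := A.filter fun ω => ω u = false with hA₀
  set A₁ := A.filter fun ω => ω u = true with hA₁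
  have hm₀ : ∀ ω ∈ A₀, ω u = false := fun ω hω => (Finset.mem_filter.1 hω).2
  have hm₁ : ∀ ω ∈ A₁, ω u = true := fun ω hω => (Finset.mem_filter.1 hω).2
  have hA01 : A₀ ∪ A₁ = A := by
    rw [hA₀, hA₁, show (A.filter fun ω => ω u = true) =
      A.filter (fun ω => ¬(ω u = false)) from Finset.filter_congr fun ω _ => by simp]
    exact Finset.filter_union_filter_not_eq _ A
  have hdisj : Disjoint A₀ A₁ := by
    rw [Finset.disjoint_left]
    intro ω h₀108 h₁109
    have e1 := hm₀ ω h₀108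
    have e2 := hm₁ ω h₁109
    rw [e1] at e2
    exact absurd e2 (by simp)
  obtain ⟨h, h0, h1⟩ := master_expect u (prodOver A₀ F) (prodOver A₁ F)
    (prodOver_depFst F hm₀) (prodOver_depSnd F hm₁)
  have eA : EP A (β := β) F =
      𝔼 z : ∀ i, β i × β i, prodOver A₀ F z * prodOver A₁ F z := by
    unfold EP
    refine Finset.expect_congr rfl fun z _ => ?_
    rw [← prodOver_union hdisj, hA01]
  have e0 : (𝔼 z : ∀ i, β i × β i, prodOver A₀ F z * prodOver A₀ F (swapAt u z)) =
      EP (A₀ ∪ A₀.image (flipAt u)) (β := β) F := by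
    unfold EP
    refine Finset.expect_congr rfl fun z _ => ?_
    rw [prodOver_swapAt, prodOver_union (disjoint_flip hm₀)]
  have e1 : (𝔼 z : ∀ i, β i × β i, prodOver A₁ F z * prodOver A₁ F (swapAt u z)) =
      EP (A₁ ∪ A₁.image (flipAt u)) (β := β) F := by
    unfold EP
    refine Finset.expect_congr rfl fun z _ => ?_
    rw [prodOver_swapAt, prodOver_union (disjoint_flip hm₁)]
  rw [e0, e1] at h
  rw [e0] at h0
  rw [e1] at h1
  rw [eA]
  exact ⟨h, h0, h1⟩

lemma hdisj_union_ne (A : Finset (ι → Bool)) (u : ι) (c : Bool) :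
    (A.filter fun ω => ω u = c) ∪ (A.filter fun ω => ω u = c).image (flipAt u) = ∅ ↔
      A.filter (fun ω => ω u = c) = ∅ := by
  constructor
  · intro h
    have := Finset.union_eq_empty.1 h
    exact this.1
  · intro h
    rw [h]
    simp

lemma symm_bound {U : Finset ι} (F : (∀ i, β i) → ℝ) {c₀ : ℝ} (hc0 : 0 ≤ c₀) (hc1 : c₀ ≤ 1)
    (hU : U.Nonempty) (hC : EP (cubeSet U) (β := β) F ≤ c₀ ^ 2 ^ U.card) :
    ∀ n (P : Finset ι), P ⊆ U → P.card = n → ∀ A ⊆ cubeSet U, A.Nonempty →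
      (∀ u ∈ U, u ∉ P → A.image (flipAt u) = A) →
      |EP A (β := β) F| ^ 2 ^ n ≤ c₀ ^ 2 ^ U.card := by
  have hCb0 : (0:ℝ) ≤ c₀ ^ 2 ^ U.card := pow_nonneg hc0 _
  have hCb1 : c₀ ^ 2 ^ U.card ≤ 1 := pow_le_one₀ hc0 hc1
  intro n
  induction n with
  | zero =>
    intro P hP hPc A hAsub hAne hAinv
    have hP0 : P = ∅ := Finset.card_eq_zero.1 hPc
    subst hP0
    have hAcube : A = cubeSet U :=
      orbit hAsub (fun u hu => hAinv u hu (Finset.notMem_empty u)) hAne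
    rw [hAcube]
    simp only [pow_zero, pow_one]
    rw [abs_of_nonneg (EP_cube_nonneg U hU F)]
    exact hC
  | succ n ih =>
    intro P hP hPc A hAsub hAne hAinv
    have hPne : P.Nonempty := Finset.card_pos.1 (by omega)
    obtain ⟨u, huP⟩ := hPne
    have huU : u ∈ U := hP huP
    obtain ⟨hstep, h0, h1⟩ := symm_step A u F
    have hP' : P.erase u ⊆ U := (Finset.erase_subset u P).trans hP
    have hP'c : (P.erase u).card = n := by
      rw [Finset.card_erase_of_mem huP]; omega
    have hsub : ∀ c : Bool,
        (A.filter fun ω => ω u = c) ∪ (A.filter fun ω => ω u = c).image (flipAt u) ⊆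
          cubeSet U := by
      intro c
      refine Finset.union_subset ((Finset.filter_subset _ _).trans hAsub) ?_
      intro ω hω
      obtain ⟨ω', hω', rfl⟩ := Finset.mem_image.1 hω
      exact flip_mem_cubeSet huU (hAsub ((Finset.filter_subset _ _) hω'))
    have hinv' : ∀ c : Bool, ∀ u' ∈ U, u' ∉ P.erase u →
        ((A.filter fun ω => ω u = c) ∪
            (A.filter fun ω => ω u = c).image (flipAt u)).image (flipAt u') =
          (A.filter fun ω => ω u = c) ∪ (A.filter fun ω => ω u = c).image (flipAt u) := by
      intro c u' hu'U hu'P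
      by_cases hu'u : u' = u
      · subst hu'u
        rw [Finset.image_union, Finset.image_image]
        rw [show flipAt u' ∘ flipAt u' = id from funext (flipAt_flipAt u')]
        rw [Finset.image_id]
        exact Finset.union_comm _ _
      · have hu'notP : u' ∉ P := fun h => hu'P (Finset.mem_erase.2 ⟨hu'u, h⟩)
        have hAinv' : A.image (flipAt u') = A := hAinv u' hu'U hu'notP
        have hfilter : (A.filter fun ω => ω u = c).image (flipAt u') =
            A.filter fun ω => ω u = c := by
          conv_rhs => rw [← hAinv', Finset.filter_image]
          congr 1
          refine Finset.filter_congr fun ω _ => ?_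
          rw [flipAt_apply_ne u' ω (Ne.symm hu'u)]
        rw [Finset.image_union, hfilter, Finset.image_image,
          show flipAt u' ∘ flipAt u = flipAt u ∘ flipAt u' from
            funext fun ω => flipAt_comm hu'u ω,
          ← Finset.image_image, hfilter]
    -- nonemptiness split
    have hA01 : (A.filter fun ω => ω u = false) ∪ (A.filter fun ω => ω u = true) = A := by
      rw [show (A.filter fun ω => ω u = true) =
        A.filter (fun ω => ¬(ω u = false)) from Finset.filter_congr fun ω _ => by simp]
      exact Finset.filter_union_filter_not_eq _ A
    set Cb := c₀ ^ 2 ^ U.card with hCb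
    by_cases hA₀ne : (A.filter fun ω => ω u = false).Nonempty <;>
      by_cases hA₁ne : (A.filter fun ω => ω u = true).Nonempty
    · -- both nonempty
      have hA₀'ne : ((A.filter fun ω => ω u = false) ∪
          (A.filter fun ω => ω u = false).image (flipAt u)).Nonempty :=
        hA₀ne.mono Finset.subset_union_left
      have hA₁'ne : ((A.filter fun ω => ω u = true) ∪
          (A.filter fun ω => ω u = true).image (flipAt u)).Nonempty :=
        hA₁ne.mono Finset.subset_union_left
      have b0 := ih (P.erase u) hP' hP'c _ (hsub false) hA₀'ne (hinv' false)
      have b1 := ih (P.erase u) hP' hP'c _ (hsub true) hA₁'ne (hinv' true)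
      rw [abs_of_nonneg h0] at b0
      rw [abs_of_nonneg h1] at b1
      calc |EP A (β := β) F| ^ 2 ^ (n + 1) = ((EP A (β := β) F) ^ 2) ^ 2 ^ n :=
            abs_pow_two_pow_succ _ n
        _ ≤ (EP ((A.filter fun ω => ω u = false) ∪
              (A.filter fun ω => ω u = false).image (flipAt u)) (β := β) F *
            EP ((A.filter fun ω => ω u = true) ∪
              (A.filter fun ω => ω u = true).image (flipAt u)) (β := β) F) ^ 2 ^ n :=
            pow_le_pow_left₀ (sq_nonneg _) hstep _
        _ = _ ^ 2 ^ n * _ ^ 2 ^ n := mul_pow _ _ _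
        _ ≤ Cb * Cb := mul_le_mul b0 b1 (pow_nonneg h1 _) hCb0
        _ ≤ 1 * Cb := mul_le_mul_of_nonneg_right hCb1 hCb0
        _ = Cb := one_mul _
    · -- A₁ empty
      have hA₁e : (A.filter fun ω => ω u = true) = ∅ :=
        Finset.not_nonempty_iff_eq_empty.1 hA₁ne
      have hA₁'e : (A.filter fun ω => ω u = true) ∪
          (A.filter fun ω => ω u = true).image (flipAt u) = ∅ := by
        rw [hA₁e]; simp
      rw [hA₁'e, EP_empty, mul_one] at hstep
      have hA₀'ne : ((A.filter fun ω => ω u = false) ∪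
          (A.filter fun ω => ω u = false).image (flipAt u)).Nonempty :=
        hA₀ne.mono Finset.subset_union_left
      have b0 := ih (P.erase u) hP' hP'c _ (hsub false) hA₀'ne (hinv' false)
      rw [abs_of_nonneg h0] at b0
      calc |EP A (β := β) F| ^ 2 ^ (n + 1) = ((EP A (β := β) F) ^ 2) ^ 2 ^ n :=
            abs_pow_two_pow_succ _ n
        _ ≤ (EP ((A.filter fun ω => ω u = false) ∪
              (A.filter fun ω => ω u = false).image (flipAt u)) (β := β) F) ^ 2 ^ n :=
            pow_le_pow_left₀ (sq_nonneg _) hstep _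
        _ ≤ Cb := b0
    · -- A₀ empty
      have hA₀e : (A.filter fun ω => ω u = false) = ∅ :=
        Finset.not_nonempty_iff_eq_empty.1 hA₀ne
      have hA₀'e : (A.filter fun ω => ω u = false) ∪
          (A.filter fun ω => ω u = false).image (flipAt u) = ∅ := by
        rw [hA₀e]; simp
      rw [hA₀'e, EP_empty, one_mul] at hstep
      have hA₁'ne : ((A.filter fun ω => ω u = true) ∪
          (A.filter fun ω => ω u = true).image (flipAt u)).Nonempty :=
        hA₁ne.mono Finset.subset_union_left
      have b1 := ih (P.erase u) hP' hP'c _ (hsub true) hA₁'ne (hinv' true)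
      rw [abs_of_nonneg h1] at b1
      calc |EP A (β := β) F| ^ 2 ^ (n + 1) = ((EP A (β := β) F) ^ 2) ^ 2 ^ n :=
            abs_pow_two_pow_succ _ n
        _ ≤ (EP ((A.filter fun ω => ω u = true) ∪
              (A.filter fun ω => ω u = true).image (flipAt u)) (β := β) F) ^ 2 ^ n :=
            pow_le_pow_left₀ (sq_nonneg _) hstep _
        _ ≤ Cb := b1
    · -- both empty: contradiction
      exfalso
      obtain ⟨ω, hω⟩ := hAne
      rw [← hA01] at hω
      rcases Finset.mem_union.1 hω with h | h
      · exact hA₀ne ⟨ω, h⟩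
      · exact hA₁ne ⟨ω, h⟩

lemma EP_small {U : Finset ι} (hU : U.Nonempty) (F : (∀ i, β i) → ℝ) {c₀ : ℝ}
    (hc0 : 0 ≤ c₀) (hc1 : c₀ ≤ 1) (hC : EP (cubeSet U) (β := β) F ≤ c₀ ^ 2 ^ U.card) :
    ∀ A ⊆ cubeSet U, A.Nonempty → |EP A (β := β) F| ≤ c₀ := by
  intro A hAs hAne
  have h := symm_bound F hc0 hc1 hU hC U.card U (Finset.Subset.refl U) rfl A hAs hAne
    (fun u hu hu' => absurd hu hu')
  exact le_of_pow_le_pow_left₀ (by positivity) hc0 h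

lemma EP_one_add {U : Finset ι} (f : (∀ i, β i) → ℝ) {c₀ : ℝ} (hc0 : 0 ≤ c₀)
    (habs : ∀ A ⊆ cubeSet U, A.Nonempty → |EP A (β := β) f| ≤ c₀) :
    EP (cubeSet U) (β := β) (fun x => 1 + f x) ≤ 1 + 2 ^ 2 ^ U.card * c₀ := by
  have hexp : EP (cubeSet U) (β := β) (fun x => 1 + f x) =
      ∑ A ∈ (cubeSet U).powerset, EP A (β := β) f := by
    unfold EP
    rw [← Finset.expect_sum_comm]
    refine Finset.expect_congr rfl fun z _ => ?_
    unfold prodOver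
    rw [show (∏ ω ∈ cubeSet U, ((1:ℝ) + f (mixZ ω z))) =
      ∏ ω ∈ cubeSet U, (f (mixZ ω z) + 1) from Finset.prod_congr rfl fun _ _ => add_comm _ _]
    rw [Finset.prod_add]
    exact Finset.sum_congr rfl fun A hA => by rw [Finset.prod_const_one, mul_one]
  rw [hexp]
  have hmem : (∅ : Finset (ι → Bool)) ∈ (cubeSet U).powerset := Finset.empty_mem_powerset _
  rw [← Finset.add_sum_erase _ _ hmem, EP_empty]
  have hbound : ∑ A ∈ ((cubeSet U).powerset.erase ∅), EP A (β := β) f ≤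
      (2:ℝ) ^ 2 ^ U.card * c₀ := by
    calc ∑ A ∈ ((cubeSet U).powerset.erase ∅), EP A (β := β) f
        ≤ ∑ _A ∈ ((cubeSet U).powerset.erase ∅), c₀ := by
          refine Finset.sum_le_sum fun A hA => ?_
          have h1 := Finset.mem_erase.1 hA
          have h2 := habs A (Finset.mem_powerset.1 h1.2)
            (Finset.nonempty_iff_ne_empty.2 h1.1)
          exact (le_abs_self _).trans h2
      _ = (((cubeSet U).powerset.erase ∅).card : ℝ) * c₀ := by
          rw [Finset.sum_const, nsmul_eq_mul]
      _ ≤ (2:ℝ) ^ 2 ^ U.card * c₀ := by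
          refine mul_le_mul_of_nonneg_right ?_ hc0
          have h2 : ((cubeSet U).powerset.erase ∅).card ≤ 2 ^ 2 ^ U.card := by
            calc ((cubeSet U).powerset.erase ∅).card
                ≤ (cubeSet U).powerset.card := Finset.card_le_card (Finset.erase_subset _ _)
              _ = 2 ^ (cubeSet U).card := Finset.card_powerset _
              _ ≤ 2 ^ 2 ^ U.card := Nat.pow_le_pow_right (by norm_num) (cubeSet_card_le U)
          calc (((cubeSet U).powerset.erase ∅).card : ℝ)
              ≤ ((2 ^ 2 ^ U.card : ℕ) : ℝ) := Nat.cast_le.2 h2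
            _ = (2:ℝ) ^ 2 ^ U.card := by push_cast; ring
  linarith

lemma expect_equiv' {α γ' : Type} [Fintype α] [Fintype γ'] (e : α ≃ γ') (F : α → ℝ) :
    (𝔼 a : α, F a) = 𝔼 b : γ', F (e.symm b) := by
  rw [Fintype.expect_eq_sum_div_card, Fintype.expect_eq_sum_div_card,
    ← Equiv.sum_comp e.symm F, Fintype.card_congr e]

def pairPiEquiv (γ : ι → Type) : (∀ i, γ i × γ i) ≃ (∀ i, γ i) × (∀ i, γ i) where
  toFun z := (fun i => (z i).1, fun i => (z i).2)
  invFun p := fun i => (p.1 i, p.2 i)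
  left_inv z := rfl
  right_inv p := rfl

lemma expect_pair {γ : ι → Type} [∀ i, Fintype (γ i)] [∀ i, Nonempty (γ i)]
    (Θ : (∀ i, γ i) → (∀ i, γ i) → ℝ) :
    (𝔼 z : ∀ i, γ i × γ i, Θ (fun i => (z i).1) (fun i => (z i).2)) =
      𝔼 x : ∀ i, γ i, 𝔼 y : ∀ i, γ i, Θ x y := by
  rw [expect_equiv' (pairPiEquiv γ) (fun z => Θ (fun i => (z i).1) (fun i => (z i).2))]
  rw [show (𝔼 x : ∀ i, γ i, 𝔼 y : ∀ i, γ i, Θ x y) =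
    𝔼 p ∈ (Finset.univ ×ˢ Finset.univ :
      Finset ((∀ i, γ i) × (∀ i, γ i))), Θ p.1 p.2 from (Finset.expect_product' _ _ _).symm]
  rw [Finset.univ_product_univ]
  rfl

lemma expect_fst {γ : ι → Type} [∀ i, Fintype (γ i)] [∀ i, Nonempty (γ i)]
    (Ψ : (∀ i, γ i) → ℝ) :
    (𝔼 z : ∀ i, γ i × γ i, Ψ (fun i => (z i).1)) = 𝔼 x : ∀ i, γ i, Ψ x := by
  rw [show (𝔼 z : ∀ i, γ i × γ i, Ψ (fun i => (z i).1)) =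
    𝔼 z : ∀ i, γ i × γ i, (fun x (_ : ∀ i, γ i) => Ψ x) (fun i => (z i).1)
      (fun i => (z i).2) from rfl]
  rw [expect_pair (fun x (_ : ∀ i, γ i) => Ψ x)]
  exact Finset.expect_congr rfl fun x _ => Finset.expect_const Finset.univ_nonempty _

lemma expect_restrict {γ : ι → Type} [∀ i, Fintype (γ i)] [∀ i, Nonempty (γ i)] (j : ι)
    (Ψ : (∀ i : {i // i ≠ j}, γ i) → ℝ) :
    (𝔼 z : ∀ i, γ i, Ψ (fun i => z i)) = 𝔼 y : ∀ i : {i // i ≠ j}, γ i, Ψ y := by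
  classical
  set e := Equiv.piSplitAt j γ with he
  have hres : ∀ p : γ j × (∀ i : {i // i ≠ j}, γ i),
      (fun i : {i // i ≠ j} => e.symm p ↑i) = p.2 := by
    intro p
    funext i
    have h1 : e.symm p ↑i = p.2 ⟨(i : ι), i.2⟩ := by
      simp [he, Equiv.piSplitAt, i.2]
    rw [h1]
  have hsum : (∑ z : ∀ i, γ i, Ψ (fun i => z i)) =
      (Fintype.card (γ j) : ℝ) * ∑ y : ∀ i : {i // i ≠ j}, γ i, Ψ y := by
    rw [← Equiv.sum_comp e.symm (fun z => Ψ (fun i => z i)), Fintype.sum_prod_type]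
    have hin : ∀ a : γ j, (∑ y : ∀ i : {i // i ≠ j}, γ i,
        Ψ (fun i => e.symm (a, y) ↑i)) = ∑ y : ∀ i : {i // i ≠ j}, γ i, Ψ y :=
      fun a => Finset.sum_congr rfl fun y _ => by rw [hres (a, y)]
    rw [Finset.sum_congr rfl fun a _ => hin a, Finset.sum_const, Finset.card_univ,
      nsmul_eq_mul]
  have hcard : (Fintype.card (∀ i, γ i) : ℝ) =
      (Fintype.card (γ j) : ℝ) * (Fintype.card (∀ i : {i // i ≠ j}, γ i) : ℝ) := by
    rw [Fintype.card_congr e, Fintype.card_prod]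
    push_cast
    ring
  have h1 : (Fintype.card (γ j) : ℝ) ≠ 0 := Nat.cast_ne_zero.2 Fintype.card_ne_zero
  have h2 : (Fintype.card (∀ i : {i // i ≠ j}, γ i) : ℝ) ≠ 0 :=
    Nat.cast_ne_zero.2 Fintype.card_ne_zero
  rw [Fintype.expect_eq_sum_div_card, Fintype.expect_eq_sum_div_card, hsum, hcard]
  field_simp

lemma trans_box (j : ι) (F : (∀ i : {i // i ≠ j}, β i) → ℝ) :
    EP (β := β) (cubeSet (Finset.univ.erase j)) (fun x => F (fun i => x i)) =
      𝔼 y₀ : ∀ i : {i // i ≠ j}, β i, 𝔼 y₁ : ∀ i : {i // i ≠ j}, β i,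
        ∏ ω : {i // i ≠ j} → Bool, F (mixPoint ω y₀ y₁) := by
  classical
  have hpoint : ∀ z : ∀ i, β i × β i,
      prodOver (cubeSet (Finset.univ.erase j)) (fun x => F (fun i => x i)) z =
        ∏ ω : {i // i ≠ j} → Bool,
          F (mixPoint ω (fun i : {i // i ≠ j} => (z ↑i).1)
            (fun i : {i // i ≠ j} => (z ↑i).2)) := by
    intro z
    unfold prodOver
    refine Finset.prod_nbij' (fun ω => fun i : {i // i ≠ j} => ω ↑i)
      (fun ω' => fun i => if h : i = j then false else ω' ⟨i, h⟩) ?_ ?_ ?_ ?_ ?_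
    · intro ω _; exact Finset.mem_univ _
    · intro ω' _
      rw [mem_cubeSet]
      intro i hi
      have hij : i = j := by
        by_contra hij
        exact hi (Finset.mem_erase.2 ⟨hij, Finset.mem_univ i⟩)
      rw [dif_pos hij]
    · intro ω hω
      funext i
      dsimp only
      by_cases h : i = j
      · rw [dif_pos h]
        exact ((mem_cubeSet.1 hω) i (fun hmem => (Finset.mem_erase.1 hmem).1 h)).symm
      · rw [dif_neg h]
    · intro ω' _
      funext i
      dsimp only
      rw [dif_neg i.2]
    · intro ω hω
      rfl
  unfold EP
  calc (𝔼 z : ∀ i, β i × β i,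
        prodOver (cubeSet (Finset.univ.erase j)) (fun x => F (fun i => x i)) z)
      = 𝔼 z : ∀ i, β i × β i, ∏ ω : {i // i ≠ j} → Bool,
          F (mixPoint ω (fun i : {i // i ≠ j} => (z ↑i).1)
            (fun i : {i // i ≠ j} => (z ↑i).2)) :=
        Finset.expect_congr rfl fun z _ => hpoint z
    _ = 𝔼 y : ∀ i : {i // i ≠ j}, β ↑i × β ↑i, ∏ ω : {i // i ≠ j} → Bool,
          F (mixPoint ω (fun i => (y i).1) (fun i => (y i).2)) :=
        expect_restrict j (γ := fun i => β i × β i)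
          (fun w => ∏ ω : {i // i ≠ j} → Bool,
            F (mixPoint ω (fun i => (w i).1) (fun i => (w i).2)))
    _ = 𝔼 y₀ : ∀ i : {i // i ≠ j}, β ↑i, 𝔼 y₁ : ∀ i : {i // i ≠ j}, β ↑i,
          ∏ ω : {i // i ≠ j} → Bool, F (mixPoint ω y₀ y₁) :=
        expect_pair (γ := fun i : {i // i ≠ j} => β ↑i)
          (fun x y => ∏ ω : {i // i ≠ j} → Bool, F (mixPoint ω x y))

end SLF

/-- The one-factor-per-edge variant of the strong linear forms estimate, in which the
exponent of `‖ν‖_∞` gets improved to `r/2`. -/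
theorem strong_linear_forms_gowers_half (r : ℕ) (hr : 2 ≤ r) (ε : ℝ) (hε : 0 < ε) :
    ∃ δ : ℝ, 0 < δ ∧
      ∀ (V : Fin (r + 1) → Type) [∀ i, Fintype (V i)] [∀ i, Nonempty (V i)]
        (ν : ∀ j : Fin (r + 1), EdgeSpace V j → ℝ),
        (∀ j x, 0 ≤ ν j x) → 1 ≤ hypSup V ν →
        (∀ j : Fin (r + 1), j ≠ 0 → boxNorm (fun z : EdgeSpace V j => ν j z - 1) ≤ δ) →
        ∀ g : ∀ j : Fin (r + 1), EdgeSpace V j → ℝ,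
        (∀ (j : Fin (r + 1)), j ≠ 0 → ∀ x, 0 ≤ g j x) →
        (∀ (j : Fin (r + 1)), j ≠ 0 → (∀ x, g j x ≤ 1) ∨ (∀ x, g j x ≤ ν j x)) →
        |𝔼 x : ∀ i, V i,
            (ν 0 (fun i => x i) - 1) *
              ∏ j : {j : Fin (r + 1) // j ≠ 0}, g j (fun i => x i)|
          ≤ (1 + ε) * boxNorm (fun z : EdgeSpace V 0 => ν 0 z - 1) *
              hypSup V ν ^ ((r : ℝ) / 2) := by
  classical
  have h2r : (0:ℝ) < 2 ^ 2 ^ r := by positivity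
  refine ⟨min 1 (ε / 2 ^ 2 ^ r), lt_min one_pos (by positivity), ?_⟩
  intro V _ _ ν hν hKsup hbox g hg hgle
  set δ : ℝ := min 1 (ε / 2 ^ 2 ^ r) with hδdef
  have hδ0 : 0 ≤ δ := le_min zero_le_one (by positivity)
  have hδ1 : δ ≤ 1 := min_le_left _ _
  have hδε : 2 ^ 2 ^ r * δ ≤ ε := by
    have h1 : δ ≤ ε / 2 ^ 2 ^ r := min_le_right _ _
    calc (2:ℝ) ^ 2 ^ r * δ ≤ 2 ^ 2 ^ r * (ε / 2 ^ 2 ^ r) :=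
          mul_le_mul_of_nonneg_left h1 (le_of_lt h2r)
      _ = ε := by field_simp
  set K := hypSup V ν with hKdef
  have hK1 : 1 ≤ K := hKsup
  have hK0 : (0:ℝ) ≤ K := by linarith
  have hνK : ∀ (j : Fin (r+1)) (y : EdgeSpace V j), ν j y ≤ K := by
    intro j y
    refine le_trans (le_ciSup (Set.Finite.bddAbove (Set.finite_range fun x => ν j x)) y) ?_
    exact le_ciSup (Set.Finite.bddAbove (Set.finite_range fun j' => ⨆ x, ν j' x)) j
  have hcard_sub : ∀ j : Fin (r+1), Fintype.card {i : Fin (r+1) // i ≠ j} = r := by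
    intro j
    have h1 := Fintype.card_subtype_compl (p := fun i : Fin (r+1) => i = j)
    rw [Fintype.card_subtype_eq, Fintype.card_fin] at h1
    show Fintype.card {i : Fin (r+1) // ¬ i = j} = r
    rw [h1]
    omega
  have hUcard : ∀ j : Fin (r+1), (Finset.univ.erase j).card = r := by
    intro j
    rw [Finset.card_erase_of_mem (Finset.mem_univ _), Finset.card_univ, Fintype.card_fin]
    omega
  have hUon : ∀ j : Fin (r+1), (Finset.univ.erase j).Nonempty := by
    intro j
    refine Finset.card_pos.1 ?_
    rw [hUcard j]
    omega
  -- boxNorm translation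
  have hboxpow : ∀ j : Fin (r+1),
      SLF.EP (β := V) (SLF.cubeSet (Finset.univ.erase j))
          (fun x => ν j (fun i => x i) - 1) =
        (boxNorm (fun z : EdgeSpace V j => ν j z - 1)) ^ 2 ^ r ∧
      0 ≤ boxNorm (fun z : EdgeSpace V j => ν j z - 1) := by
    intro j
    have htrans := SLF.trans_box (β := V) j (fun y : EdgeSpace V j => ν j y - 1)
    have hnn : 0 ≤ SLF.EP (β := V) (SLF.cubeSet (Finset.univ.erase j))
        (fun x => ν j (fun i => x i) - 1) :=
      SLF.EP_cube_nonneg _ (hUon j) _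
    set Din := 𝔼 y₀ : EdgeSpace V j, 𝔼 y₁ : EdgeSpace V j,
        ∏ ω : {i : Fin (r+1) // i ≠ j} → Bool,
          (ν j (mixPoint ω y₀ y₁) - 1) with hDin
    have htrans' : SLF.EP (β := V) (SLF.cubeSet (Finset.univ.erase j))
        (fun x => ν j (fun i => x i) - 1) = Din := htrans
    have hDin0 : 0 ≤ Din := by rw [← htrans']; exact hnn
    have hbN : boxNorm (fun z : EdgeSpace V j => ν j z - 1) = Din ^ ((1:ℝ) / 2 ^ r) := by
      rw [boxNorm, hcard_sub j]
    constructor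
    · rw [htrans', hbN]
      rw [← Real.rpow_natCast (Din ^ ((1:ℝ)/2^r)) (2^r), ← Real.rpow_mul hDin0]
      have hexp : (1:ℝ)/2^r * ((2^r : ℕ) : ℝ) = 1 := by
        push_cast
        field_simp
      rw [hexp, Real.rpow_one]
    · rw [hbN]
      exact Real.rpow_nonneg hDin0 _
  -- majorants
  have hmaj : ∀ j : Fin (r+1), j ≠ 0 → ∃ h : EdgeSpace V j → ℝ,
      (∀ x, (g j x)^2 ≤ K * h x) ∧ (∀ x, 0 ≤ h x) ∧
        SLF.EP (β := V) (SLF.cubeSet (Finset.univ.erase j))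
          (fun x => h (fun i => x i)) ≤ 1 + ε := by
    intro j hj
    have hEP1 : SLF.EP (β := V) (SLF.cubeSet (Finset.univ.erase j))
        (fun _ => (1:ℝ)) = 1 := by
      unfold SLF.EP SLF.prodOver
      rw [Finset.expect_congr rfl fun z _ => Finset.prod_const_one]
      exact Finset.expect_const Finset.univ_nonempty 1
    rcases hgle j hj with hcase | hcase
    · refine ⟨fun _ => 1, ?_, fun x => zero_le_one, ?_⟩
      · intro x
        show (g j x)^2 ≤ K * 1
        have h1 := hg j hj x
        have h2 := hcase x
        nlinarith
      · rw [hEP1]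
        linarith
    · refine ⟨ν j, ?_, fun x => hν j x, ?_⟩
      · intro x
        have h1 := hg j hj x
        have h2 := hcase x
        have h3 := hν j x
        have h4 := hνK j x
        nlinarith
      · have hsmall : ∀ A ⊆ SLF.cubeSet (Finset.univ.erase j), A.Nonempty →
            |SLF.EP (β := V) A (fun x => ν j (fun i => x i) - 1)| ≤ δ := by
          refine SLF.EP_small (hUon j) _ hδ0 hδ1 ?_
          rw [(hboxpow j).1, hUcard j]
          exact pow_le_pow_left₀ (hboxpow j).2 (hbox j hj) _
        have hone := SLF.EP_one_add (U := Finset.univ.erase j) (β := V)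
          (fun x => ν j (fun i => x i) - 1) hδ0 hsmall
        rw [hUcard j] at hone
        have heq : (fun x : ∀ i, V i => 1 + (ν j (fun i => x i) - 1)) =
            fun x : ∀ i, V i => ν j (fun i => x i) := by
          funext x
          ring
        rw [heq] at hone
        calc SLF.EP (β := V) (SLF.cubeSet (Finset.univ.erase j))
              (fun x => ν j (fun i => x i)) ≤ 1 + 2 ^ 2 ^ r * δ := hone
          _ ≤ 1 + ε := by linarith
  -- set up chain data
  set T : Finset (Fin (r+1)) := Finset.univ.erase 0 with hTdef
  have hTcard : T.card = r := hUcard 0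
  have hTne : T.Nonempty := hUon 0
  set Φ : (∀ i, V i) → ℝ := fun x => ν 0 (fun i => x i) - 1 with hΦ
  set G : ∀ _ : Fin (r+1), (∀ i, V i) → ℝ := fun j x => g j (fun i => x i) with hG
  have hGI : ∀ t ∈ T, SLF.CoordIndep t (G t) := by
    intro t ht x v
    show g t (fun i : {i // i ≠ t} => Function.update x t v ↑i) =
      g t (fun i : {i // i ≠ t} => x ↑i)
    congr 1
    funext i
    exact Function.update_of_ne i.2 v x
  have hA : ∀ t ∈ T, ∀ S ⊆ T, t ∉ S →
      (𝔼 z : ∀ i, V i × V i, (SLF.prodOver (SLF.cubeSet S) (G t) z) ^ 2) ≤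
        K ^ 2 ^ S.card * (1 + ε) := by
    intro t ht S hS htS
    have htne : t ≠ 0 := (Finset.mem_erase.1 ht).1
    obtain ⟨h, hg2, hh0, hEPfull⟩ := hmaj t htne
    have hSU : S ⊆ Finset.univ.erase t := by
      intro i hi
      exact Finset.mem_erase.2 ⟨fun he => htS (he ▸ hi), Finset.mem_univ i⟩
    have hHB : SLF.EP (β := V) (SLF.cubeSet S) (fun x => h (fun i => x i)) ≤ 1 + ε :=
      SLF.EP_cube_le_of_full (fun x => hh0 _) (by linarith) hEPfull S hSU
    have hH0 : 0 ≤ SLF.EP (β := V) (SLF.cubeSet S) (fun x => h (fun i => x i)) :=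
      SLF.EP_nonneg (fun x => hh0 _)
    have hpoint : ∀ z : ∀ i, V i × V i, (SLF.prodOver (SLF.cubeSet S) (G t) z) ^ 2 ≤
        K ^ (SLF.cubeSet S).card *
          SLF.prodOver (SLF.cubeSet S) (fun x => h (fun i => x i)) z := by
      intro z
      unfold SLF.prodOver
      rw [← Finset.prod_pow]
      calc ∏ ω ∈ SLF.cubeSet S, (G t (SLF.mixZ ω z))^2
          ≤ ∏ ω ∈ SLF.cubeSet S, (K * h (fun i => SLF.mixZ ω z ↑i)) :=
            Finset.prod_le_prod (fun ω _ => sq_nonneg _) (fun ω _ => hg2 _)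
        _ = K ^ (SLF.cubeSet S).card *
              ∏ ω ∈ SLF.cubeSet S, h (fun i => SLF.mixZ ω z ↑i) := by
            rw [Finset.prod_mul_distrib, Finset.prod_const]
    calc (𝔼 z : ∀ i, V i × V i, (SLF.prodOver (SLF.cubeSet S) (G t) z) ^ 2)
        ≤ 𝔼 z : ∀ i, V i × V i, K ^ (SLF.cubeSet S).card *
            SLF.prodOver (SLF.cubeSet S) (fun x => h (fun i => x i)) z :=
          Finset.expect_le_expect (fun z _ => hpoint z)
      _ = K ^ (SLF.cubeSet S).card *
            SLF.EP (β := V) (SLF.cubeSet S) (fun x => h (fun i => x i)) := by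
          rw [← Finset.mul_expect]
          rfl
      _ ≤ K ^ 2 ^ S.card * (1 + ε) := by
          refine mul_le_mul ?_ hHB hH0 (pow_nonneg hK0 _)
          exact pow_le_pow_right₀ hK1 (SLF.cubeSet_card_le S)
  have hDT0 : 0 ≤ SLF.EP (β := V) (SLF.cubeSet T) (fun x => Φ x * ∏ j ∈ T \ T, G j x) :=
    SLF.EP_cube_nonneg _ hTne _
  have hchain := SLF.chain T Φ G K (1 + ε) hK1 (by linarith) hGI hA hDT0 r ∅
    (Finset.empty_subset T) (by rw [Finset.sdiff_empty, hTcard])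
  rw [hTcard] at hchain
  -- identify D∅ with the target expectation
  have hcube0 : SLF.cubeSet (∅ : Finset (Fin (r+1))) = {fun _ => false} := by
    ext ω
    rw [SLF.mem_cubeSet, Finset.mem_singleton]
    constructor
    · intro hω
      funext i
      exact hω i (Finset.notMem_empty i)
    · intro hω i _
      rw [hω]
  have hD0 : SLF.EP (β := V) (SLF.cubeSet ∅) (fun x => Φ x * ∏ j ∈ T \ ∅, G j x) =
      𝔼 x : ∀ i, V i, (ν 0 (fun i => x i) - 1) *
        ∏ j : {j : Fin (r + 1) // j ≠ 0}, g j (fun i => x i) := by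
    have h1 : ∀ z : ∀ i, V i × V i,
        SLF.prodOver (SLF.cubeSet ∅) (fun x => Φ x * ∏ j ∈ T \ ∅, G j x) z =
          (fun x => Φ x * ∏ j ∈ T \ ∅, G j x) (fun i => (z i).1) := by
      intro z
      unfold SLF.prodOver
      rw [hcube0, Finset.prod_singleton]
      rfl
    unfold SLF.EP
    rw [Finset.expect_congr rfl fun z _ => h1 z]
    rw [SLF.expect_fst (γ := V) (fun x => Φ x * ∏ j ∈ T \ ∅, G j x)]
    refine Finset.expect_congr rfl fun x _ => ?_
    rw [Finset.sdiff_empty]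
    congr 1
    rw [hTdef]
    exact Finset.prod_subtype (Finset.univ.erase 0)
      (fun j => by simp [Finset.mem_erase]) (fun j => G j x)
  -- identify D_T with the box norm
  set N := boxNorm (fun z : EdgeSpace V 0 => ν 0 z - 1) with hNdef
  have hN0 : 0 ≤ N := (hboxpow 0).2
  have hDTval : SLF.EP (β := V) (SLF.cubeSet T) (fun x => Φ x * ∏ j ∈ T \ T, G j x) =
      N ^ 2 ^ r := by
    have h1 : (fun x : ∀ i, V i => Φ x * ∏ j ∈ T \ T, G j x) =
        fun x : ∀ i, V i => ν 0 (fun i => x i) - 1 := by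
      funext x
      rw [Finset.sdiff_self, Finset.prod_empty, mul_one]
    rw [h1, hTdef]
    exact (hboxpow 0).1
  rw [hD0, hDTval] at hchain
  -- final numerics
  have hKr0 : (0:ℝ) ≤ K ^ ((r:ℝ)/2) := Real.rpow_nonneg hK0 _
  have hR0 : (0:ℝ) ≤ (1 + ε) * N * K ^ ((r:ℝ)/2) := by
    have h1 : (0:ℝ) ≤ 1 + ε := by linarith
    exact mul_nonneg (mul_nonneg h1 hN0) hKr0
  refine le_of_pow_le_pow_left₀ (n := 2 ^ r) (by positivity) hR0 ?_
  have hKrp : (K ^ ((r:ℝ)/2)) ^ (2^r : ℕ) = K ^ (r * 2^(r-1)) := by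
    rw [← Real.rpow_natCast (K ^ ((r:ℝ)/2)) (2^r), ← Real.rpow_mul hK0]
    have hexp : (r:ℝ)/2 * ((2^r : ℕ) : ℝ) = ((r * 2^(r-1) : ℕ) : ℝ) := by
      push_cast
      have h2 : (2:ℝ)^r = 2 * 2^(r-1) := by
        rw [← pow_succ']
        congr 1
        omega
      rw [h2]
      ring
    rw [hexp, Real.rpow_natCast]
  refine le_trans hchain ?_
  calc K ^ (r * 2 ^ (r - 1)) * (1 + ε) ^ (2 ^ r - 1) * N ^ 2 ^ r
      ≤ K ^ (r * 2 ^ (r - 1)) * (1 + ε) ^ (2 ^ r) * N ^ 2 ^ r := by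
        refine mul_le_mul_of_nonneg_right
          (mul_le_mul_of_nonneg_left
            (pow_le_pow_right₀ (by linarith) (Nat.sub_le _ _)) (pow_nonneg hK0 _))
          (pow_nonneg hN0 _)
    _ = ((1 + ε) * N * K ^ ((r:ℝ)/2)) ^ 2 ^ r := by
        rw [mul_pow, mul_pow, hKrp]
        ring
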